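/- In the setting of the immersion ι: Y^{unr} = X(G,α) -> Y = X(G,I,α) with all I_v finite and graphs locally finite, the group Pr(Y) = Im(L_Y) is generated as a Z[G]-module by the elements Σ_{i ∈ I_v} i·P_v, as v ranges over V_X, where P_v = ι_*(L_{Y^{unr}}((v, 1_G))). -/

import Mathlib

/-- A graph in Serre's formalism. -/
structure SerreGraph where
  V : Type
  E : Type
  o : E → V
  t : E → V
  inv : E → E
  inv_ne : ∀ e, inv e ≠ e
  inv_inv : ∀ e, inv (inv e) = e
  o_inv : ∀ e, o (inv e) = t e

namespace SerreGraph

variable (X : SerreGraph)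

/-- `Adj a b` : there is a directed edge from `a` to `b`. -/
def Adj (a b : X.V) : Prop := ∃ e, X.o e = a ∧ X.t e = b

/-- A graph is connected if any two vertices are joined by a path of directed edges. -/
def Connected : Prop := ∀ a b : X.V, Relation.ReflTransGen X.Adj a b

/-- The degree (sum of coefficients) map `s : Div(X) → ℤ`. -/
noncomputable def degMap : (X.V →₀ ℤ) →ₗ[ℤ] ℤ :=
  Finsupp.lsum ℤ fun _ => (LinearMap.id : ℤ →ₗ[ℤ] ℤ)

/-- The valency of a vertex: the number of directed edges with origin `v`. -/
noncomputable def val (v : X.V) : ℕ := Nat.card {e : X.E // X.o e = v}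

/-- The Laplacian operator `L = D - A` on `Div(X)`, the free abelian group on vertices. -/
noncomputable def lap : (X.V →₀ ℤ) →ₗ[ℤ] (X.V →₀ ℤ) :=
  Finsupp.lsum ℤ fun v => LinearMap.toSpanSingleton ℤ _
    ((X.val v : ℤ) • Finsupp.single v (1 : ℤ)
      - ∑ᶠ e : {e : X.E // X.o e = v}, Finsupp.single (X.t e.1) (1 : ℤ))

/-- The degree operator `D` on `Div(X)`. -/
noncomputable def degOp : (X.V →₀ ℤ) →ₗ[ℤ] (X.V →₀ ℤ) :=
  Finsupp.lsum ℤ fun v => LinearMap.toSpanSingleton ℤ _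
    ((X.val v : ℤ) • Finsupp.single v (1 : ℤ))

/-- The adjacency operator `A` on `Div(X)`. -/
noncomputable def adjOp : (X.V →₀ ℤ) →ₗ[ℤ] (X.V →₀ ℤ) :=
  Finsupp.lsum ℤ fun v => LinearMap.toSpanSingleton ℤ _
    (∑ᶠ e : {e : X.E // X.o e = v}, Finsupp.single (X.t e.1) (1 : ℤ))

/-- Degree-zero divisors. -/
noncomputable def Div0 : Submodule ℤ (X.V →₀ ℤ) := LinearMap.ker X.degMap

/-- Principal divisors: the image of the Laplacian. -/
noncomputable def Pr : Submodule ℤ (X.V →₀ ℤ) := LinearMap.range X.lap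

/-- The Picard group of degree zero: `Div⁰(X)/Pr(X)`. -/
noncomputable def Pic0 := X.Div0 ⧸ X.Pr.comap X.Div0.subtype

noncomputable instance : AddCommGroup X.Pic0 :=
  inferInstanceAs (AddCommGroup (X.Div0 ⧸ X.Pr.comap X.Div0.subtype))

noncomputable instance : Module ℤ X.Pic0 :=
  inferInstanceAs (Module ℤ (X.Div0 ⧸ X.Pr.comap X.Div0.subtype))

/-- Morphisms of graphs in Serre's formalism. -/
structure Hom (Y X : SerreGraph) where
  fV : Y.V → X.V
  fE : Y.E → X.E
  o_map : ∀ e, X.o (fE e) = fV (Y.o e)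
  t_map : ∀ e, X.t (fE e) = fV (Y.t e)
  inv_map : ∀ e, X.inv (fE e) = fE (Y.inv e)

/-- A branched cover with ramification indices `m`: surjective on vertices and
directed edges, and over each edge at `f(w)` the fiber in the edges at `w`
has cardinality `m w`. -/
def IsBranchedCover {Y X : SerreGraph} (f : Hom Y X) (m : Y.V → ℕ) : Prop :=
  Function.Surjective f.fV ∧ Function.Surjective f.fE ∧
    ∀ (w : Y.V) (e : X.E), X.o e = f.fV w →
      Nat.card {ε : Y.E // Y.o ε = w ∧ f.fE ε = e} = m w

/-- The pushforward `f_* : Div(Y) → Div(X)`, sending a vertex `w` to `f(w)`. -/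
noncomputable def pushforward {Y X : SerreGraph} (f : Hom Y X) :
    (Y.V →₀ ℤ) →ₗ[ℤ] (X.V →₀ ℤ) :=
  Finsupp.lmapDomain ℤ ℤ f.fV

end SerreGraph
namespace SerreGraph

variable (X : SerreGraph) (G : Type) [Group G]

/-- The derived graph `X(G, I, α)` of a voltage assignment `α` with a family of
subgroups `I`. -/
def Derived (I : X.V → Subgroup G) (α : X.E → G)
    (hα : ∀ e, α (X.inv e) = (α e)⁻¹) : SerreGraph where
  V := Σ v : X.V, G ⧸ I v
  E := X.E × G
  o := fun ε => ⟨X.o ε.1, QuotientGroup.mk ε.2⟩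
  t := fun ε => ⟨X.t ε.1, QuotientGroup.mk (ε.2 * α ε.1)⟩
  inv := fun ε => (X.inv ε.1, ε.2 * α ε.1)
  inv_ne := fun ε h => X.inv_ne ε.1 (congrArg Prod.fst h)
  inv_inv := fun ε => by
    have h1 := X.inv_inv ε.1
    have h2 := hα ε.1
    simp [h1, h2, mul_assoc]
  o_inv := fun ε =>
    congrArg (fun p => (⟨p, QuotientGroup.mk (ε.2 * α ε.1)⟩ : Σ v : X.V, G ⧸ I v))
      (X.o_inv ε.1)

/-- The natural projection `X(G, I, α) → X` is a morphism of graphs. -/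
def derivedProj (I : X.V → Subgroup G) (α : X.E → G)
    (hα : ∀ e, α (X.inv e) = (α e)⁻¹) : Hom (X.Derived G I α hα) X where
  fV := fun w => w.1
  fE := fun ε => ε.1
  o_map := fun _ => rfl
  t_map := fun _ => rfl
  inv_map := fun _ => rfl

end SerreGraph
namespace SerreGraph

variable (X : SerreGraph) (G : Type) [Group G]

/-- The unramified derived graph `X(G, α)` of a voltage assignment (all subgroups trivial). -/
def DerivedU (α : X.E → G) (hα : ∀ e, α (X.inv e) = (α e)⁻¹) : SerreGraph where
  V := X.V × G
  E := X.E × G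
  o := fun ε => (X.o ε.1, ε.2)
  t := fun ε => (X.t ε.1, ε.2 * α ε.1)
  inv := fun ε => (X.inv ε.1, ε.2 * α ε.1)
  inv_ne := fun ε h => X.inv_ne ε.1 (congrArg Prod.fst h)
  inv_inv := fun ε => by
    have h1 := X.inv_inv ε.1
    have h2 := hα ε.1
    simp [h1, h2, mul_assoc]
  o_inv := fun ε => by
    have h := X.o_inv ε.1
    simp [h]

/-- The natural immersion `ι : X(G, α) → X(G, I, α)`, `(v, σ) ↦ (v, σ I_v)` on vertices. -/
def iotaV (I : X.V → Subgroup G) (α : X.E → G) (hα : ∀ e, α (X.inv e) = (α e)⁻¹) :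
    (X.DerivedU G α hα).V → (X.Derived G I α hα).V :=
  fun w => ⟨w.1, QuotientGroup.mk w.2⟩

end SerreGraph

namespace SerreGraph

variable (X : SerreGraph) (G : Type) [Group G]

/-- The action of `τ ∈ G` on the vertices of the derived graph `X(G, I, α)`. -/
def derivedVAct (I : X.V → Subgroup G) (τ : G) :
    (Σ v : X.V, G ⧸ I v) → Σ v : X.V, G ⧸ I v :=
  fun w => ⟨w.1, τ • w.2⟩

/-- The divisor `P_v = ι_*(L_{Y^unr}((v, 1_G))) ∈ Div(Y)`. -/
noncomputable def Pdiv (I : X.V → Subgroup G) (α : X.E → G)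
    (hα : ∀ e, α (X.inv e) = (α e)⁻¹) (v : X.V) :
    ((X.Derived G I α hα).V →₀ ℤ) :=
  Finsupp.mapDomain (X.iotaV G I α hα)
    ((X.DerivedU G α hα).lap
      (Finsupp.single ((v, (1 : G)) : (X.DerivedU G α hα).V) (1 : ℤ)))

end SerreGraph

namespace SerreGraphAux

open SerreGraph

lemma lap_single (Z : SerreGraph) (w : Z.V) :
    Z.lap (Finsupp.single w 1) = (Z.val w : ℤ) • Finsupp.single w 1
      - ∑ᶠ e : {e : Z.E // Z.o e = w}, Finsupp.single (Z.t e.1) (1 : ℤ) := by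
  unfold SerreGraph.lap
  rw [Finsupp.lsum_single, LinearMap.toSpanSingleton_apply, one_smul]

variable (X : SerreGraph) (G : Type) [Group G] (I : X.V → Subgroup G) (α : X.E → G)
  (hα : ∀ e, α (X.inv e) = (α e)⁻¹)

/-- Edge fiber of the unramified derived graph. -/
def equivU (v : X.V) (g : G) :
    {e : X.E // X.o e = v} ≃
      {ε : (X.DerivedU G α hα).E // (X.DerivedU G α hα).o ε = (v, g)} where
  toFun e := ⟨(e.1, g), by
    show ((X.o e.1, g) : X.V × G) = (v, g)
    rw [e.2]⟩
  invFun ε := ⟨ε.1.1, congrArg Prod.fst ε.2⟩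
  left_inv e := rfl
  right_inv ε := by
    obtain ⟨⟨e, h⟩, hε⟩ := ε
    have : h = g := congrArg Prod.snd hε
    subst this
    rfl

lemma mem_of_sigma_eq {u v : X.V} {g σ : G}
    (h : (⟨u, (QuotientGroup.mk g : G ⧸ I u)⟩ : Σ w, G ⧸ I w) = ⟨v, QuotientGroup.mk σ⟩) :
    σ⁻¹ * g ∈ I v := by
  obtain ⟨h1, h2⟩ := Sigma.mk.inj_iff.mp h
  subst h1
  exact (QuotientGroup.eq).mp (eq_of_heq h2).symm

/-- Edge fiber of the derived graph. -/
def equivY (v : X.V) (σ : G) :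
    (I v) × {e : X.E // X.o e = v} ≃
      {ε : (X.Derived G I α hα).E //
        (X.Derived G I α hα).o ε = ⟨v, QuotientGroup.mk σ⟩} where
  toFun p := ⟨(p.2.1, σ * p.1.1), by
    obtain ⟨⟨i, hi⟩, e, he⟩ := p
    show (⟨X.o e, QuotientGroup.mk (σ * i)⟩ : Σ u, G ⧸ I u) = ⟨v, QuotientGroup.mk σ⟩
    subst he
    have h2 : (QuotientGroup.mk (σ * i) : G ⧸ I (X.o e)) = QuotientGroup.mk σ :=
      (QuotientGroup.eq).mpr (by simpa [mul_inv_rev, mul_assoc] using inv_mem hi)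
    exact congrArg (Sigma.mk (X.o e)) h2⟩
  invFun ε := ⟨⟨σ⁻¹ * ε.1.2, mem_of_sigma_eq X G I ε.2⟩,
    ⟨ε.1.1, congrArg Sigma.fst ε.2⟩⟩
  left_inv p := by
    obtain ⟨⟨i, hi⟩, e, he⟩ := p
    simp
  right_inv ε := by
    obtain ⟨⟨e, g⟩, hε⟩ := ε
    simp

lemma finite_eX [∀ w, Finite {ε : (X.DerivedU G α hα).E // (X.DerivedU G α hα).o ε = w}]
    (v : X.V) : Finite {e : X.E // X.o e = v} :=
  @Finite.of_equiv _ _ ((inferInstance : ∀ w : (X.DerivedU G α hα).V, Finite {ε : (X.DerivedU G α hα).E //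
    (X.DerivedU G α hα).o ε = w}) (v, 1)) (equivU X G α hα v 1).symm

/-- The divisor `ι_* L_{Y^unr} (v, g)`, computed explicitly. -/
noncomputable def Q (v : X.V) (g : G) : ((X.Derived G I α hα).V →₀ ℤ) :=
  (Nat.card {e : X.E // X.o e = v} : ℤ) •
      Finsupp.single (⟨v, QuotientGroup.mk g⟩ : (X.Derived G I α hα).V) 1
    - ∑ᶠ e : {e : X.E // X.o e = v},
        Finsupp.single
          (⟨X.t e.1, QuotientGroup.mk (g * α e.1)⟩ : (X.Derived G I α hα).V) (1 : ℤ)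

section

variable [∀ w, Finite {ε : (X.DerivedU G α hα).E // (X.DerivedU G α hα).o ε = w}]

lemma iota_lap (v : X.V) (g : G) :
    Finsupp.mapDomain (X.iotaV G I α hα)
      ((X.DerivedU G α hα).lap
        (Finsupp.single ((v, g) : (X.DerivedU G α hα).V) (1 : ℤ)))
      = Q X G I α hα v g := by
  classical
  letI : Fintype {ε : (X.DerivedU G α hα).E // (X.DerivedU G α hα).o ε = (v, g)} :=
    @Fintype.ofFinite _ ((inferInstance : ∀ w : (X.DerivedU G α hα).V, Finite {ε : (X.DerivedU G α hα).E //
      (X.DerivedU G α hα).o ε = w}) (v, g))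
  letI : Fintype {e : X.E // X.o e = v} :=
    @Fintype.ofFinite _ (finite_eX X G α hα v)
  have hval : ((X.DerivedU G α hα).val (v, g) : ℤ)
      = (Nat.card {e : X.E // X.o e = v} : ℤ) := by
    norm_cast
    exact Nat.card_congr (equivU X G α hα v g).symm
  erw [lap_single, ← Finsupp.lmapDomain_apply ℤ ℤ, map_sub, map_smul,
    Finsupp.lmapDomain_apply, Finsupp.mapDomain_single,
    finsum_eq_sum_of_fintype, map_sum, Q, hval, finsum_eq_sum_of_fintype]
  congr 1
  refine Fintype.sum_equiv (equivU X G α hα v g).symm _ _ ?_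
  rintro ⟨⟨e, h⟩, hε⟩
  have : h = g := congrArg Prod.snd hε
  subst this
  rw [Finsupp.lmapDomain_apply, Finsupp.mapDomain_single]
  rfl

end

lemma act_Q
    [∀ w, Finite {ε : (X.DerivedU G α hα).E // (X.DerivedU G α hα).o ε = w}]
    (τ : G) (v : X.V) (g : G) :
    Finsupp.mapDomain (X.derivedVAct G I τ) (Q X G I α hα v g)
      = Q X G I α hα v (τ * g) := by
  classical
  letI : Fintype {e : X.E // X.o e = v} :=
    @Fintype.ofFinite _ (finite_eX X G α hα v)
  erw [Q, Q, ← Finsupp.lmapDomain_apply ℤ ℤ, map_sub, map_smul,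
    finsum_eq_sum_of_fintype, finsum_eq_sum_of_fintype, map_sum]
  congr 1
  · rw [Finsupp.lmapDomain_apply, Finsupp.mapDomain_single]
    rfl
  · refine Finset.sum_congr rfl fun e _ => ?_
    rw [Finsupp.lmapDomain_apply, Finsupp.mapDomain_single]
    show Finsupp.single (⟨X.t e.1, QuotientGroup.mk (τ * (g * α e.1))⟩
        : (X.Derived G I α hα).V) (1 : ℤ) = _
    rw [mul_assoc]

variable [∀ w, Finite {ε : (X.DerivedU G α hα).E // (X.DerivedU G α hα).o ε = w}]
  [∀ v : X.V, Finite (I v)]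

lemma lapY_single (v : X.V) (σ : G) :
    (X.Derived G I α hα).lap
        (Finsupp.single (⟨v, QuotientGroup.mk σ⟩ : (X.Derived G I α hα).V) (1 : ℤ))
      = ∑ᶠ i : I v, Q X G I α hα v (σ * i) := by
  classical
  letI : Fintype {e : X.E // X.o e = v} :=
    @Fintype.ofFinite _ (finite_eX X G α hα v)
  letI : Fintype (I v) := Fintype.ofFinite _
  letI : Fintype {ε : (X.Derived G I α hα).E //
      (X.Derived G I α hα).o ε = ⟨v, QuotientGroup.mk σ⟩} :=
    @Fintype.ofFinite _ (Finite.of_equiv _ (equivY X G I α hα v σ))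
  erw [lap_single]
  have hval : ((X.Derived G I α hα).val ⟨v, QuotientGroup.mk σ⟩ : ℤ)
      = (Fintype.card (I v) : ℤ) * (Nat.card {e : X.E // X.o e = v} : ℤ) := by
    have : (X.Derived G I α hα).val ⟨v, QuotientGroup.mk σ⟩
        = Nat.card ((I v) × {e : X.E // X.o e = v}) :=
      Nat.card_congr (equivY X G I α hα v σ).symm
    rw [this, Nat.card_prod, Nat.card_eq_fintype_card]
    push_cast
    ring
  have hQ : ∀ i : I v, Q X G I α hα v (σ * i)
      = (Nat.card {e : X.E // X.o e = v} : ℤ) •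
          Finsupp.single (⟨v, QuotientGroup.mk σ⟩ : (X.Derived G I α hα).V) 1
        - ∑ e : {e : X.E // X.o e = v},
            Finsupp.single
              (⟨X.t e.1, QuotientGroup.mk (σ * i * α e.1)⟩
                : (X.Derived G I α hα).V) (1 : ℤ) := by
    intro i
    have hmk : (QuotientGroup.mk (σ * i) : G ⧸ I v) = QuotientGroup.mk σ :=
      (QuotientGroup.eq).mpr (by simp [mul_inv_rev, mul_assoc, inv_mem i.2])
    rw [Q, hmk, finsum_eq_sum_of_fintype]
  erw [finsum_eq_sum_of_fintype, finsum_eq_sum_of_fintype,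
    Finset.sum_congr rfl fun i _ => hQ i, Finset.sum_sub_distrib,
    Finset.sum_const, Finset.card_univ]
  congr 1
  · erw [hval, ← Nat.cast_smul_eq_nsmul ℤ (Fintype.card (I v)), smul_smul]; rfl
  · refine (Fintype.sum_equiv (equivY X G I α hα v σ) _ _ fun p => rfl).symm.trans ?_
    exact Fintype.sum_prod_type _

lemma gen_eq (v : X.V) (τ : G) :
    Finsupp.mapDomain (X.derivedVAct G I τ)
        (∑ᶠ i : (I v),
          Finsupp.mapDomain (X.derivedVAct G I (i : G)) (X.Pdiv G I α hα v))
      = (X.Derived G I α hα).lap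
          (Finsupp.single (⟨v, QuotientGroup.mk τ⟩ : (X.Derived G I α hα).V) (1 : ℤ)) := by
  classical
  letI : Fintype (I v) := Fintype.ofFinite _
  have hP : X.Pdiv G I α hα v = Q X G I α hα v 1 := iota_lap X G I α hα v 1
  have h1 : ∀ i : I v,
      Finsupp.mapDomain (X.derivedVAct G I (i : G)) (X.Pdiv G I α hα v)
        = Q X G I α hα v i := by
    intro i
    rw [hP, act_Q, mul_one]
  rw [lapY_single, finsum_eq_sum_of_fintype, finsum_eq_sum_of_fintype]
  rw [Finset.sum_congr rfl fun i _ => h1 i]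
  erw [← Finsupp.lmapDomain_apply ℤ ℤ, map_sum]
  refine Finset.sum_congr rfl fun i _ => ?_
  erw [Finsupp.lmapDomain_apply, act_Q]

end SerreGraphAux

open SerreGraph in
/-- With `Y = X(G, I, α)` as above (all `I_v` finite, graphs locally
finite), `Pr(Y) = Im(L_Y)` is generated as a `ℤ[G]`-module (i.e. as a `ℤ`-module by all
`G`-translates) by the divisors `Σ_{i ∈ I_v} i·P_v`, `v ∈ V_X`, where
`P_v = ι_*(L_{Y^unr}((v, 1_G)))`. -/
theorem pr_generated_by_traces (X : SerreGraph) (G : Type) [Group G]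
    (I : X.V → Subgroup G) (α : X.E → G) (hα : ∀ e, α (X.inv e) = (α e)⁻¹)
    [∀ w, Finite {ε : (X.DerivedU G α hα).E // (X.DerivedU G α hα).o ε = w}]
    [∀ w, Finite {ε : (X.Derived G I α hα).E // (X.Derived G I α hα).o ε = w}]
    [∀ v : X.V, Finite (I v)] :
    LinearMap.range (X.Derived G I α hα).lap
      = Submodule.span ℤ
          {D : (X.Derived G I α hα).V →₀ ℤ | ∃ (τ : G) (v : X.V),
            D = Finsupp.mapDomain (X.derivedVAct G I τ)
              (∑ᶠ i : (I v),
                Finsupp.mapDomain (X.derivedVAct G I (i : G))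
                  (X.Pdiv G I α hα v))} := by
    classical
  apply le_antisymm
  · rintro D ⟨c, rfl⟩
    induction c using Finsupp.induction_linear with
    | zero => simp
    | add f g hf hg => rw [map_add]; exact add_mem hf hg
    | single a b =>
      obtain ⟨v, q⟩ := a
      obtain ⟨τ, rfl⟩ := QuotientGroup.mk_surjective q
      have hs : (Finsupp.single (⟨v, QuotientGroup.mk τ⟩ : (X.Derived G I α hα).V) b)
          = b • Finsupp.single (⟨v, QuotientGroup.mk τ⟩ : (X.Derived G I α hα).V) (1 : ℤ) := by
        rw [Finsupp.smul_single, smul_eq_mul, mul_one]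
      erw [hs, map_smul]
      refine Submodule.smul_mem _ _ (Submodule.subset_span ?_)
      exact ⟨τ, v, (SerreGraphAux.gen_eq X G I α hα v τ).symm⟩
  · rw [Submodule.span_le]
    rintro D ⟨τ, v, rfl⟩
    exact ⟨Finsupp.single (⟨v, QuotientGroup.mk τ⟩ : (X.Derived G I α hα).V) (1 : ℤ),
      (SerreGraphAux.gen_eq X G I α hα v τ).symm⟩
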